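/- arXiv:2003.11928 — 3 statements merged into one kernel-verified Lean document; each statement's English description precedes it below -/
import Mathlib

section
/- For any m×n real matrix P with entries in [0,1], row sums ≤ 1, column sums ≤ 1, and total sum k, P lies in the convex hull of the set of binary matrices with row sums ≤ 1, column sums ≤ 1, and total sum k. In particular, the extreme points of the relaxed polytope are exactly the k-cardinality partial permutation matrices. -/
open Finset

private lemma bvn_perm_entry {α : Type*} [Fintype α] [DecidableEq α]
    (σ : Equiv.Perm α) (x y : α) :
    σ.permMatrix ℝ x y = if σ x = y then (1:ℝ) else 0 := by
  simp [Equiv.Perm.permMatrix, PEquiv.toMatrix_apply, Equiv.toPEquiv_apply, Option.mem_def,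
    eq_comm]

private lemma bvn_hull (m n k : ℕ) (hm : k ≤ m) (hn : k ≤ n)
    (P : Fin m → Fin n → ℝ)
    (h01 : ∀ i a, P i a ∈ Set.Icc (0:ℝ) 1)
    (hrow : ∀ i, ∑ a, P i a ≤ 1)
    (hcol : ∀ a, ∑ i, P i a ≤ 1)
    (htot : ∑ i, ∑ a, P i a = (k:ℝ)) :
    P ∈ convexHull ℝ {Q : Fin m → Fin n → ℝ |
        (∀ i a, Q i a = 0 ∨ Q i a = 1) ∧
        (∀ i, ∑ a, Q i a ≤ 1) ∧ (∀ a, ∑ i, Q i a ≤ 1) ∧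
        ∑ i, ∑ a, Q i a = (k : ℝ)} := by
  classical
  have hcard : Fintype.card (Fin n ⊕ Fin (m - k)) = Fintype.card (Fin m ⊕ Fin (n - k)) := by
    simp only [Fintype.card_sum, Fintype.card_fin]; omega
  set e : (Fin n ⊕ Fin (m - k)) ≃ (Fin m ⊕ Fin (n - k)) := Fintype.equivOfCardEq hcard with he
  set f : (Fin m ⊕ Fin (n - k)) → (Fin n ⊕ Fin (m - k)) → ℝ := fun x y =>
    match x, y with
    | .inl i, .inl a => P i a
    | .inl i, .inr _ => (1 - ∑ a, P i a) / ((m - k : ℕ) : ℝ)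
    | .inr _, .inl a => (1 - ∑ i, P i a) / ((n - k : ℕ) : ℝ)
    | .inr _, .inr _ => 0
    with hf
  set M : Matrix (Fin m ⊕ Fin (n - k)) (Fin m ⊕ Fin (n - k)) ℝ :=
    Matrix.of fun x y => f x (e.symm y) with hMdef
  have hP0 : ∀ i a, 0 ≤ P i a := fun i a => (h01 i a).1
  have hmr : ((m - k : ℕ) : ℝ) = (m:ℝ) - k := by push_cast [hm]; ring
  have hnr : ((n - k : ℕ) : ℝ) = (n:ℝ) - k := by push_cast [hn]; ring
  have hrsum : ∑ i, (1 - ∑ a, P i a) = (m:ℝ) - k := by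
    rw [Finset.sum_sub_distrib, htot]; simp
  have hcsum : ∑ a, (1 - ∑ i, P i a) = (n:ℝ) - k := by
    rw [Finset.sum_sub_distrib, Finset.sum_comm, htot]; simp
  -- row sums of f are 1
  have hrow1 : ∀ x, ∑ z, f x z = 1 := by
    intro x
    cases x with
    | inl i =>
      rw [Fintype.sum_sum_type]
      have h2 : ∑ _j : Fin (m - k), (1 - ∑ a, P i a) / ((m - k : ℕ) : ℝ)
          = ((m - k : ℕ) : ℝ) * ((1 - ∑ a, P i a) / ((m - k : ℕ) : ℝ)) := by
        rw [Finset.sum_const, card_univ, Fintype.card_fin, nsmul_eq_mul]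
      show (∑ a, P i a) + _ = 1
      rw [h2]
      rcases eq_or_lt_of_le hm with h | h
      · -- k = m : each row sum must be 1
        have h0 : ∑ i', (1 - ∑ a, P i' a) = 0 := by rw [hrsum, ← h]; ring
        have := (Finset.sum_eq_zero_iff_of_nonneg
          (fun i' _ => by linarith [hrow i'])).1 h0 i (mem_univ i)
        have hmk : (m - k : ℕ) = 0 := by omega
        rw [hmk]
        push_cast
        linarith
      · have hne : ((m - k : ℕ) : ℝ) ≠ 0 := by
          rw [hmr]; intro hc; have : (m:ℝ) = k := by linarith
          exact absurd (Nat.cast_injective this) (by omega)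
        rw [mul_div_cancel₀ _ hne]; ring
    | inr b =>
      rw [Fintype.sum_sum_type]
      show (∑ a, (1 - ∑ i, P i a) / ((n - k : ℕ) : ℝ)) + (∑ _j : Fin (m-k), (0:ℝ)) = 1
      have hlt : k < n := by have := b.2; omega
      have hne : ((n - k : ℕ) : ℝ) ≠ 0 := by
        rw [hnr]; intro hc; have : (n:ℝ) = k := by linarith
        exact absurd (Nat.cast_injective this) (by omega)
      rw [← Finset.sum_div, hcsum, ← hnr, div_self hne]
      simp
  -- column sums of f are 1
  have hcol1 : ∀ z, ∑ x, f x z = 1 := by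
    intro z
    cases z with
    | inl a =>
      rw [Fintype.sum_sum_type]
      have h2 : ∑ _b : Fin (n - k), (1 - ∑ i, P i a) / ((n - k : ℕ) : ℝ)
          = ((n - k : ℕ) : ℝ) * ((1 - ∑ i, P i a) / ((n - k : ℕ) : ℝ)) := by
        rw [Finset.sum_const, card_univ, Fintype.card_fin, nsmul_eq_mul]
      show (∑ i, P i a) + _ = 1
      rw [h2]
      rcases eq_or_lt_of_le hn with h | h
      · have h0 : ∑ a', (1 - ∑ i, P i a') = 0 := by rw [hcsum, ← h]; ring
        have := (Finset.sum_eq_zero_iff_of_nonneg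
          (fun a' _ => by linarith [hcol a'])).1 h0 a (mem_univ a)
        have hnk : (n - k : ℕ) = 0 := by omega
        rw [hnk]
        push_cast
        linarith
      · have hne : ((n - k : ℕ) : ℝ) ≠ 0 := by
          rw [hnr]; intro hc; have : (n:ℝ) = k := by linarith
          exact absurd (Nat.cast_injective this) (by omega)
        rw [mul_div_cancel₀ _ hne]; ring
    | inr j =>
      rw [Fintype.sum_sum_type]
      show (∑ i, (1 - ∑ a, P i a) / ((m - k : ℕ) : ℝ)) + (∑ _b : Fin (n-k), (0:ℝ)) = 1
      have hlt : k < m := by have := j.2; omega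
      have hne : ((m - k : ℕ) : ℝ) ≠ 0 := by
        rw [hmr]; intro hc; have : (m:ℝ) = k := by linarith
        exact absurd (Nat.cast_injective this) (by omega)
      rw [← Finset.sum_div, hrsum, ← hmr, div_self hne]
      simp
  have hf0 : ∀ x z, 0 ≤ f x z := by
    intro x z
    cases x with
    | inl i =>
      cases z with
      | inl a => exact hP0 i a
      | inr j => exact div_nonneg (by linarith [hrow i]) (Nat.cast_nonneg _)
    | inr b =>
      cases z with
      | inl a => exact div_nonneg (by linarith [hcol a]) (Nat.cast_nonneg _)
      | inr j => exact le_refl (0:ℝ)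
  have hMds : M ∈ doublyStochastic ℝ (Fin m ⊕ Fin (n - k)) := by
    rw [mem_doublyStochastic_iff_sum]
    refine ⟨fun x y => hf0 x (e.symm y), fun x => ?_, fun y => ?_⟩
    · show ∑ y, f x (e.symm y) = 1
      rw [Equiv.sum_comp e.symm (f x)]
      exact hrow1 x
    · exact hcol1 (e.symm y)
  obtain ⟨w, hw0, hw1, hwM⟩ := exists_eq_sum_perm_of_mem_doublyStochastic hMds
  have hMe : ∀ x y, M x y = ∑ σ, w σ * (if σ x = y then (1:ℝ) else 0) := by
    intro x y
    rw [← hwM, Matrix.sum_apply]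
    refine Finset.sum_congr rfl fun σ _ => ?_
    rw [Matrix.smul_apply, bvn_perm_entry, smul_eq_mul]
  -- support condition
  have hsup : ∀ σ, 0 < w σ → ∀ b : Fin (n - k), (e.symm (σ (Sum.inr b))).isLeft := by
    intro σ hσ b
    cases hz : e.symm (σ (Sum.inr b)) with
    | inl a => simp
    | inr j =>
      exfalso
      have hM0 : M (Sum.inr b) (σ (Sum.inr b)) = 0 := by
        show f (Sum.inr b) (e.symm (σ (Sum.inr b))) = 0
        rw [hz]
      rw [hMe] at hM0
      have := (Finset.sum_eq_zero_iff_of_nonneg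
        (fun σ' _ => mul_nonneg (hw0 σ') (by split <;> norm_num))).1 hM0 σ (mem_univ σ)
      simp at this
      linarith
  -- indicator sums
  have hind : ∀ (σ : Equiv.Perm (Fin m ⊕ Fin (n - k))) (x),
      ∑ a, (if σ x = e (Sum.inl a) then (1:ℝ) else 0)
        = if (e.symm (σ x)).isLeft then 1 else 0 := by
    intro σ x
    cases hz : e.symm (σ x) with
    | inl a0 =>
      have hiff : ∀ a : Fin n, (σ x = e (Sum.inl a)) ↔ a0 = a := by
        intro a
        rw [← Equiv.symm_apply_eq, hz, Sum.inl.injEq]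
      simp [hiff]
    | inr j =>
      have hiff : ∀ a : Fin n, ¬ (σ x = e (Sum.inl a)) := by
        intro a h
        rw [← Equiv.symm_apply_eq, hz] at h
        exact Sum.inr_ne_inl h
      simp [hiff]
  have hcolind : ∀ (σ : Equiv.Perm (Fin m ⊕ Fin (n - k))) (a : Fin n),
      ∑ i, (if σ (Sum.inl i) = e (Sum.inl a) then (1:ℝ) else 0) ≤ 1 := by
    intro σ a
    cases hz : σ.symm (e (Sum.inl a)) with
    | inl i0 =>
      have hiff : ∀ i : Fin m, (σ (Sum.inl i) = e (Sum.inl a)) ↔ i = i0 := by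
        intro i
        rw [Equiv.apply_eq_iff_eq_symm_apply, hz, Sum.inl.injEq]
      simp [hiff]
    | inr b =>
      have hiff : ∀ i : Fin m, ¬ (σ (Sum.inl i) = e (Sum.inl a)) := by
        intro i h
        rw [Equiv.apply_eq_iff_eq_symm_apply, hz] at h
        exact Sum.inl_ne_inr h
      simp [hiff]
  have hmass : ∀ σ, 0 < w σ →
      ∑ i, ∑ a, (if σ (Sum.inl i) = e (Sum.inl a) then (1:ℝ) else 0) = (k:ℝ) := by
    intro σ hσ
    rw [Finset.sum_congr rfl fun i _ => hind σ (Sum.inl i)]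
    have htotind : ∑ x : Fin m ⊕ Fin (n - k),
        (if (e.symm (σ x)).isLeft then (1:ℝ) else 0) = (n:ℝ) := by
      rw [Finset.sum_congr rfl fun x _ => (hind σ x).symm, Finset.sum_comm]
      have h1 : ∀ a : Fin n, ∑ x, (if σ x = e (Sum.inl a) then (1:ℝ) else 0) = 1 := by
        intro a
        have hiff : ∀ x, (σ x = e (Sum.inl a)) ↔ x = σ.symm (e (Sum.inl a)) := fun x => by
          rw [Equiv.apply_eq_iff_eq_symm_apply]
        simp [hiff]
      rw [Finset.sum_congr rfl fun a _ => h1 a]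
      simp
    rw [Fintype.sum_sum_type] at htotind
    have hslack : ∑ b : Fin (n - k),
        (if (e.symm (σ (Sum.inr b))).isLeft then (1:ℝ) else 0) = ((n - k : ℕ) : ℝ) := by
      rw [Finset.sum_congr rfl fun b _ => if_pos (hsup σ hσ b)]
      simp
    rw [hslack, hnr] at htotind
    linarith
  -- the partial permutation matrices
  set Q : Equiv.Perm (Fin m ⊕ Fin (n - k)) → (Fin m → Fin n → ℝ) :=
    fun σ i a => if σ (Sum.inl i) = e (Sum.inl a) then 1 else 0 with hQdef
  have hQmem : ∀ σ, 0 < w σ → Q σ ∈ {Q : Fin m → Fin n → ℝ |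
      (∀ i a, Q i a = 0 ∨ Q i a = 1) ∧
      (∀ i, ∑ a, Q i a ≤ 1) ∧ (∀ a, ∑ i, Q i a ≤ 1) ∧
      ∑ i, ∑ a, Q i a = (k : ℝ)} := by
    intro σ hσ
    refine ⟨fun i a => ?_, fun i => ?_, fun a => ?_, hmass σ hσ⟩
    · rw [hQdef]
      dsimp only
      split
      · right; rfl
      · left; rfl
    · show ∑ a, (if σ (Sum.inl i) = e (Sum.inl a) then (1:ℝ) else 0) ≤ 1
      rw [hind σ (Sum.inl i)]
      split <;> norm_num
    · exact hcolind σ a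
  have hPQ : ∀ i a, P i a = ∑ σ, w σ * Q σ i a := by
    intro i a
    have h1 : P i a = M (Sum.inl i) (e (Sum.inl a)) := by
      show P i a = f (Sum.inl i) (e.symm (e (Sum.inl a)))
      rw [Equiv.symm_apply_apply]
    rw [h1, hMe]
  set t := univ.filter (fun σ => 0 < w σ) with ht
  have hsum_t : ∑ σ ∈ t, w σ = 1 := by
    rw [ht, Finset.sum_filter_of_ne, hw1]
    intro σ _ h
    exact (hw0 σ).lt_of_ne (Ne.symm h)
  have hcm : t.centerMass w Q = P := by
    rw [Finset.centerMass_eq_of_sum_1 _ _ hsum_t]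
    funext i
    funext a
    have h1 : (∑ σ ∈ t, w σ • Q σ) i a = ∑ σ ∈ t, w σ * Q σ i a := by
      rw [Finset.sum_apply, Finset.sum_apply]
      exact Finset.sum_congr rfl fun σ _ => rfl
    rw [h1, ht, Finset.sum_filter_of_ne, ← hPQ]
    intro σ _ h
    rcases (hw0 σ).lt_or_eq with h' | h'
    · exact h'
    · exfalso; apply h; rw [← h']; ring
  rw [← hcm]
  exact Finset.centerMass_mem_convexHull t (fun σ _ => hw0 σ) (by rw [hsum_t]; norm_num)
    (fun σ hσ => hQmem σ (Finset.mem_filter.1 hσ).2)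

theorem stmt_8 (m n k : ℕ) (hk : k ≤ min m n) :
    (∀ P : Fin m → Fin n → ℝ,
      (∀ i a, P i a ∈ Set.Icc (0 : ℝ) 1) →
      (∀ i, ∑ a, P i a ≤ 1) →
      (∀ a, ∑ i, P i a ≤ 1) →
      ∑ i, ∑ a, P i a = (k : ℝ) →
      P ∈ convexHull ℝ {Q : Fin m → Fin n → ℝ |
        (∀ i a, Q i a = 0 ∨ Q i a = 1) ∧
        (∀ i, ∑ a, Q i a ≤ 1) ∧ (∀ a, ∑ i, Q i a ≤ 1) ∧
        ∑ i, ∑ a, Q i a = (k : ℝ)}) ∧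
    Set.extremePoints ℝ
      {P : Fin m → Fin n → ℝ |
        (∀ i a, P i a ∈ Set.Icc (0 : ℝ) 1) ∧
        (∀ i, ∑ a, P i a ≤ 1) ∧ (∀ a, ∑ i, P i a ≤ 1) ∧
        ∑ i, ∑ a, P i a = (k : ℝ)} =
      {Q : Fin m → Fin n → ℝ |
        (∀ i a, Q i a = 0 ∨ Q i a = 1) ∧
        (∀ i, ∑ a, Q i a ≤ 1) ∧ (∀ a, ∑ i, Q i a ≤ 1) ∧
        ∑ i, ∑ a, Q i a = (k : ℝ)} := by
  have hm : k ≤ m := le_trans hk (min_le_left _ _)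
  have hn : k ≤ n := le_trans hk (min_le_right _ _)
  set S : Set (Fin m → Fin n → ℝ) := {Q : Fin m → Fin n → ℝ |
        (∀ i a, Q i a = 0 ∨ Q i a = 1) ∧
        (∀ i, ∑ a, Q i a ≤ 1) ∧ (∀ a, ∑ i, Q i a ≤ 1) ∧
        ∑ i, ∑ a, Q i a = (k : ℝ)} with hS
  set A : Set (Fin m → Fin n → ℝ) := {P : Fin m → Fin n → ℝ |
        (∀ i a, P i a ∈ Set.Icc (0 : ℝ) 1) ∧
        (∀ i, ∑ a, P i a ≤ 1) ∧ (∀ a, ∑ i, P i a ≤ 1) ∧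
        ∑ i, ∑ a, P i a = (k : ℝ)} with hA
  have part1 : ∀ P : Fin m → Fin n → ℝ,
      (∀ i a, P i a ∈ Set.Icc (0 : ℝ) 1) →
      (∀ i, ∑ a, P i a ≤ 1) →
      (∀ a, ∑ i, P i a ≤ 1) →
      ∑ i, ∑ a, P i a = (k : ℝ) →
      P ∈ convexHull ℝ S := fun P h1 h2 h3 h4 => bvn_hull m n k hm hn P h1 h2 h3 h4
  have hSA : S ⊆ A := by
    rintro Q ⟨h01, h2, h3, h4⟩
    refine ⟨fun i a => ?_, h2, h3, h4⟩
    rcases h01 i a with h | h <;> rw [h] <;> constructor <;> norm_num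
  have hAconv : Convex ℝ A := by
    rintro x ⟨hx1, hx2, hx3, hx4⟩ y ⟨hy1, hy2, hy3, hy4⟩ a b ha hb hab
    have hentry : ∀ i p, (a • x + b • y) i p = a * x i p + b * y i p := fun i p => rfl
    refine ⟨fun i p => ?_, fun i => ?_, fun p => ?_, ?_⟩
    · rw [hentry]
      obtain ⟨hx0, hx1'⟩ := hx1 i p
      obtain ⟨hy0, hy1'⟩ := hy1 i p
      constructor
      · positivity
      · nlinarith
    · rw [Finset.sum_congr rfl fun p _ => hentry i p, Finset.sum_add_distrib,
        ← Finset.mul_sum, ← Finset.mul_sum]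
      nlinarith [hx2 i, hy2 i]
    · rw [Finset.sum_congr rfl fun i _ => hentry i p, Finset.sum_add_distrib,
        ← Finset.mul_sum, ← Finset.mul_sum]
      nlinarith [hx3 p, hy3 p]
    · have : ∀ i : Fin m, ∑ p, (a • x + b • y) i p = a * ∑ p, x i p + b * ∑ p, y i p := by
        intro i
        rw [Finset.sum_congr rfl fun p _ => hentry i p, Finset.sum_add_distrib,
          ← Finset.mul_sum, ← Finset.mul_sum]
      rw [Finset.sum_congr rfl fun i _ => this i, Finset.sum_add_distrib,
        ← Finset.mul_sum, ← Finset.mul_sum, hx4, hy4]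
      nlinarith
  refine ⟨part1, Set.Subset.antisymm ?_ ?_⟩
  · -- extreme points ⊆ S
    intro P hP
    have hPA : P ∈ A := hP.1
    obtain ⟨h1, h2, h3, h4⟩ := hPA
    have hPhull : P ∈ convexHull ℝ S := part1 P h1 h2 h3 h4
    have hhullA : convexHull ℝ S ⊆ A := convexHull_min hSA hAconv
    have : P ∈ (convexHull ℝ S).extremePoints ℝ :=
      inter_extremePoints_subset_extremePoints_of_subset hhullA ⟨hPhull, hP⟩
    exact extremePoints_convexHull_subset this
  · -- S ⊆ extreme points
    intro Q hQ
    refine ⟨hSA hQ, ?_⟩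
    rintro x hx y hy ⟨a, b, ha, hb, hab, hxy⟩
    obtain ⟨hQ01, -, -, -⟩ := hQ
    obtain ⟨hx1, -, -, -⟩ := hx
    obtain ⟨hy1, -, -, -⟩ := hy
    have key : ∀ i p, x i p = Q i p ∧ y i p = Q i p := by
      intro i p
      have hxyip : a * x i p + b * y i p = Q i p := by
        rw [← hxy]; rfl
      obtain ⟨hx0, hx1'⟩ := hx1 i p
      obtain ⟨hy0, hy1'⟩ := hy1 i p
      rcases hQ01 i p with h | h <;> rw [h] at hxyip ⊢ <;> constructor <;> nlinarith
    · funext i; funext p; exact (key i p).1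
end

section
/- Let D be an m×n matrix of nonnegative reals, A_I ⊆ {1,...,m} and B_I ⊆ {1,...,n} with |A_I|=|B_I|=k, and τ* : A_I → B_I a bijection such that: (i) for every i ∈ A_I, D_{i,τ*(i)} < D_{i,a} for all a ≠ τ*(i), and (ii) for every (i,a) with i ∉ A_I or a ∉ B_I, D_{ia} ≥ max_{i'∈A_I} D_{i',τ*(i')}. Then the matrix P* induced by τ* is a minimizer of the linear assignment objective F_u(P) = Σ_{i,a} D_{ia} P_{ia} over all k-cardinality partial permutation matrices P, and every minimizer P satisfies: each row of P supported outside A_I contributes cost at least max_{i'∈A_I} D_{i',τ*(i')}. -/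
open Finset

theorem stmt_11 (m n k : ℕ) (D : Fin m → Fin n → ℝ)
    (hD : ∀ i a, 0 ≤ D i a)
    (AI : Finset (Fin m)) (BI : Finset (Fin n))
    (hA : AI.card = k) (hB : BI.card = k)
    (τ : Fin m → Fin n) (hτ : Set.BijOn τ ↑AI ↑BI)
    (hcons : ∀ i ∈ AI, ∀ a, a ≠ τ i → D i (τ i) < D i a)
    (hdist : ∀ i a, (i ∉ AI ∨ a ∉ BI) → ∀ i' ∈ AI, D i' (τ i') ≤ D i a)
    (Pstar : Fin m → Fin n → ℝ)
    (hPstar : ∀ i a, Pstar i a = if i ∈ AI ∧ a = τ i then 1 else 0) :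
    (∀ P : Fin m → Fin n → ℝ,
      (∀ i a, P i a = 0 ∨ P i a = 1) →
      (∀ i, ∑ a, P i a ≤ 1) → (∀ a, ∑ i, P i a ≤ 1) →
      ∑ i, ∑ a, P i a = (k : ℝ) →
      ∑ i, ∑ a, D i a * Pstar i a ≤ ∑ i, ∑ a, D i a * P i a) ∧
    (∀ P : Fin m → Fin n → ℝ,
      ((∀ i a, P i a = 0 ∨ P i a = 1) ∧
       (∀ i, ∑ a, P i a ≤ 1) ∧ (∀ a, ∑ i, P i a ≤ 1) ∧
       ∑ i, ∑ a, P i a = (k : ℝ)) →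
      (∀ Q : Fin m → Fin n → ℝ,
        (∀ i a, Q i a = 0 ∨ Q i a = 1) →
        (∀ i, ∑ a, Q i a ≤ 1) → (∀ a, ∑ i, Q i a ≤ 1) →
        ∑ i, ∑ a, Q i a = (k : ℝ) →
        ∑ i, ∑ a, D i a * P i a ≤ ∑ i, ∑ a, D i a * Q i a) →
      ∀ i ∉ AI, ∀ a, P i a = 1 → ∀ i' ∈ AI, D i' (τ i') ≤ D i a) := by
  constructor
  · intro P h01 hrow hcol htot
    -- the support of P
    set S : Finset (Fin m × Fin n) := Finset.univ.filter (fun p => P p.1 p.2 = 1) with hSdef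
    have hPnn : ∀ i a, (0:ℝ) ≤ P i a := by
      intro i a; rcases h01 i a with h | h <;> simp [h]
    have hrowinj : ∀ p ∈ S, ∀ q ∈ S, p.1 = q.1 → p = q := by
      intro p hp q hq h1
      by_contra hne
      have h2 : p.2 ≠ q.2 := fun h => hne (Prod.ext h1 h)
      simp only [hSdef, Finset.mem_filter, Finset.mem_univ, true_and] at hp hq
      have h2' : (2:ℝ) ≤ ∑ a, P p.1 a := by
        calc (2:ℝ) = ∑ a ∈ ({p.2, q.2} : Finset (Fin n)), P p.1 a := by
              rw [Finset.sum_pair h2, hp, h1, hq]; norm_num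
          _ ≤ ∑ a, P p.1 a :=
              Finset.sum_le_sum_of_subset_of_nonneg (Finset.subset_univ _)
                (fun a _ _ => hPnn _ a)
      linarith [hrow p.1]
    -- cost of P as a sum over the support
    have hcost : ∑ i, ∑ a, D i a * P i a = ∑ p ∈ S, D p.1 p.2 := by
      rw [← Finset.sum_product', Finset.univ_product_univ]
      rw [← Finset.sum_filter_of_ne (p := fun p => P p.1 p.2 = 1)
        (by
          intro p _ h
          rcases h01 p.1 p.2 with h0 | h0
          · exfalso; rw [h0, mul_zero] at h; exact h rfl
          · exact h0)]
      apply Finset.sum_congr rfl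
      intro p hp
      simp only [hSdef, Finset.mem_filter] at hp
      rw [hp.2, mul_one]
    -- cardinality of the support
    have hcard : S.card = k := by
      have hc : (S.card : ℝ) = (k : ℝ) := by
        rw [← htot, ← Finset.sum_product', Finset.univ_product_univ]
        rw [← Finset.sum_filter_of_ne (p := fun p => P p.1 p.2 = 1)
          (by
            intro p _ h
            rcases h01 p.1 p.2 with h0 | h0
            · exact absurd h0 h
            · exact h0)]
        rw [Finset.sum_congr rfl (fun p hp => by
          simp only [hSdef, Finset.mem_filter] at hp; exact hp.2)]
        simp [hSdef]
      exact_mod_cast hc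
    -- cost of Pstar
    have hL : ∑ i, ∑ a, D i a * Pstar i a = ∑ i ∈ AI, D i (τ i) := by
      have hinner : ∀ i, ∑ a, D i a * Pstar i a = if i ∈ AI then D i (τ i) else 0 := by
        intro i
        by_cases hi : i ∈ AI <;> simp [hPstar, hi, mul_ite, Finset.sum_ite_eq']
      rw [Finset.sum_congr rfl (fun i _ => hinner i)]
      simp [Finset.sum_ite_mem]
    -- split the support
    set S1 : Finset (Fin m × Fin n) := S.filter (fun p => p.1 ∈ AI ∧ p.2 ∈ BI) with hS1def
    set S2 : Finset (Fin m × Fin n) := S.filter (fun p => ¬(p.1 ∈ AI ∧ p.2 ∈ BI)) with hS2def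
    have hsplit : ∑ p ∈ S1, D p.1 p.2 + ∑ p ∈ S2, D p.1 p.2 = ∑ p ∈ S, D p.1 p.2 :=
      Finset.sum_filter_add_sum_filter_not S _ _
    have hcardsplit : S1.card + S2.card = k := by
      rw [← hcard]; exact Finset.card_filter_add_card_filter_not _
    set T : Finset (Fin m) := S1.image Prod.fst with hTdef
    have hinjT : Set.InjOn Prod.fst (S1 : Set (Fin m × Fin n)) := by
      intro p hp q hq h
      exact hrowinj p (Finset.filter_subset _ _ (by exact_mod_cast hp)) q
        (Finset.filter_subset _ _ (by exact_mod_cast hq)) h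
    have hTcard : T.card = S1.card := Finset.card_image_of_injOn hinjT
    have hTsub : T ⊆ AI := by
      intro i hi
      simp only [hTdef, Finset.mem_image] at hi
      obtain ⟨p, hp, hpi⟩ := hi
      simp only [hS1def, Finset.mem_filter] at hp
      exact hpi ▸ hp.2.1
    have hsdiff : ∑ i ∈ AI \ T, D i (τ i) + ∑ i ∈ T, D i (τ i) = ∑ i ∈ AI, D i (τ i) :=
      Finset.sum_sdiff hTsub
    have hsdcard : (AI \ T).card = S2.card := by
      rw [Finset.card_sdiff_of_subset hTsub, hTcard, hA]; omega
    -- bound on S1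
    have hT1 : ∑ i ∈ T, D i (τ i) ≤ ∑ p ∈ S1, D p.1 p.2 := by
      rw [hTdef, Finset.sum_image (fun p hp q hq h => hinjT (by exact_mod_cast hp) (by exact_mod_cast hq) h)]
      apply Finset.sum_le_sum
      intro p hp
      simp only [hS1def, Finset.mem_filter] at hp
      by_cases h : p.2 = τ p.1
      · rw [h]
      · exact le_of_lt (hcons p.1 hp.2.1 p.2 h)
    -- bound on S2
    have hT2 : ∑ i ∈ AI \ T, D i (τ i) ≤ ∑ p ∈ S2, D p.1 p.2 := by
      rcases S2.eq_empty_or_nonempty with he | hne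
      · have : (AI \ T) = ∅ := Finset.card_eq_zero.mp (by rw [hsdcard, he]; simp)
        rw [this, he]; simp
      · set c : ℝ := S2.inf' hne (fun p => D p.1 p.2) with hcdef
        obtain ⟨p0, hp0, hc0⟩ := Finset.exists_mem_eq_inf' hne (fun p => D p.1 p.2)
        have hp0' : p0.1 ∉ AI ∨ p0.2 ∉ BI := by
          have := (Finset.mem_filter.mp hp0).2
          tauto
        have h1 : ∑ i ∈ AI \ T, D i (τ i) ≤ (AI \ T).card • c := by
          apply Finset.sum_le_card_nsmul
          intro i hi
          rw [hcdef, hc0]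
          exact hdist p0.1 p0.2 hp0' i (Finset.mem_sdiff.mp hi).1
        have h2 : S2.card • c ≤ ∑ p ∈ S2, D p.1 p.2 :=
          Finset.card_nsmul_le_sum _ _ _ (fun p hp => Finset.inf'_le _ hp)
        rw [hsdcard] at h1
        exact h1.trans h2
    rw [hL, hcost, ← hsplit, ← hsdiff]
    linarith
  · intro P _ _ i hi a _ i' hi'
    exact hdist i a (Or.inl hi) i' hi'
end

section
/- Under strict unary consistency and strict unary distinguishability — i.e., (i) for every i ∈ A_I, D_{i,τ*(i)} < D_{i,a} for all a ∈ B with a ≠ τ*(i), and D_{i,τ*(i)} < D_{i',τ*(i)} for all i' ≠ i, and (ii) D_{ia} > max_{i'∈A_I} D_{i',τ*(i')} whenever i ∉ A_I or a ∉ B_I — the matrix P* induced by τ* is the unique minimizer of F_u(P) = Σ_{i,a} D_{ia} P_{ia} over the set of k-cardinality partial permutation matrices. -/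
open Finset

private lemma aux_le {α β : Type*} (s : Finset α) (t : Finset β) (f : α → ℝ) (g : β → ℝ)
    (hcard : s.card = t.card) (h : ∀ x ∈ s, ∀ y ∈ t, f x ≤ g y) :
    ∑ x ∈ s, f x ≤ ∑ y ∈ t, g y := by
  rcases s.eq_empty_or_nonempty with hs | hs
  · subst hs
    have : t = ∅ := Finset.card_eq_zero.mp (by simpa using hcard.symm)
    simp [this]
  · have ht : t.Nonempty := Finset.card_pos.mp (hcard ▸ Finset.card_pos.mpr hs)
    obtain ⟨y₀, hy₀t, hy₀⟩ := Finset.exists_min_image t g ht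
    calc ∑ x ∈ s, f x ≤ ∑ _x ∈ s, g y₀ := Finset.sum_le_sum (fun x hx => h x hx y₀ hy₀t)
      _ = t.card • g y₀ := by rw [Finset.sum_const, hcard]
      _ ≤ ∑ y ∈ t, g y := Finset.card_nsmul_le_sum t g (g y₀) hy₀

private lemma aux_lt {α β : Type*} (s : Finset α) (t : Finset β) (f : α → ℝ) (g : β → ℝ)
    (hcard : s.card = t.card) (hs : s.Nonempty) (h : ∀ x ∈ s, ∀ y ∈ t, f x < g y) :
    ∑ x ∈ s, f x < ∑ y ∈ t, g y := by
  have ht : t.Nonempty := Finset.card_pos.mp (hcard ▸ Finset.card_pos.mpr hs)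
  obtain ⟨y₀, hy₀t, hy₀⟩ := Finset.exists_min_image t g ht
  calc ∑ x ∈ s, f x < ∑ _x ∈ s, g y₀ :=
        Finset.sum_lt_sum_of_nonempty hs (fun x hx => h x hx y₀ hy₀t)
    _ = t.card • g y₀ := by rw [Finset.sum_const, hcard]
    _ ≤ ∑ y ∈ t, g y := Finset.card_nsmul_le_sum t g (g y₀) hy₀

theorem stmt_12 (m n k : ℕ) (hk : 1 ≤ k) (D : Fin m → Fin n → ℝ)
    (hD : ∀ i a, 0 ≤ D i a)
    (AI : Finset (Fin m)) (BI : Finset (Fin n))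
    (hA : AI.card = k) (hB : BI.card = k)
    (τ : Fin m → Fin n) (hτ : Set.BijOn τ ↑AI ↑BI)
    (hcons1 : ∀ i ∈ AI, ∀ a, a ≠ τ i → D i (τ i) < D i a)
    (hcons2 : ∀ i ∈ AI, ∀ i', i' ≠ i → D i (τ i) < D i' (τ i))
    (hdist : ∀ i a, (i ∉ AI ∨ a ∉ BI) → ∀ i' ∈ AI, D i' (τ i') < D i a)
    (Pstar : Fin m → Fin n → ℝ)
    (hPstar : ∀ i a, Pstar i a = if i ∈ AI ∧ a = τ i then 1 else 0) :
    ((∀ i a, Pstar i a = 0 ∨ Pstar i a = 1) ∧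
     (∀ i, ∑ a, Pstar i a ≤ 1) ∧ (∀ a, ∑ i, Pstar i a ≤ 1) ∧
     ∑ i, ∑ a, Pstar i a = (k : ℝ)) ∧
    (∀ P : Fin m → Fin n → ℝ,
      (∀ i a, P i a = 0 ∨ P i a = 1) →
      (∀ i, ∑ a, P i a ≤ 1) → (∀ a, ∑ i, P i a ≤ 1) →
      ∑ i, ∑ a, P i a = (k : ℝ) →
      P ≠ Pstar →
      ∑ i, ∑ a, D i a * Pstar i a < ∑ i, ∑ a, D i a * P i a) := by
  have hτinj : Set.InjOn τ ↑AI := hτ.injOn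
  have hrowstar : ∀ i, ∑ a, Pstar i a = if i ∈ AI then (1:ℝ) else 0 := by
    intro i
    by_cases hi : i ∈ AI
    · simp [hPstar, hi]
    · simp [hPstar, hi]
  constructor
  · refine ⟨?_, ?_, ?_, ?_⟩
    · intro i a; rw [hPstar]; split <;> simp
    · intro i; rw [hrowstar]; split <;> norm_num
    · intro a
      have : ∑ i, Pstar i a = ((Finset.univ.filter (fun i => i ∈ AI ∧ a = τ i)).card : ℝ) := by
        simp only [hPstar]
        rw [Finset.sum_boole]
      rw [this]
      have hc : (Finset.univ.filter (fun i => i ∈ AI ∧ a = τ i)).card ≤ 1 := by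
        apply Finset.card_le_one.mpr
        intro i hi j hj
        simp only [Finset.mem_filter] at hi hj
        exact hτinj hi.2.1 hj.2.1 (hi.2.2 ▸ hj.2.2 ▸ rfl)
      exact_mod_cast hc
    · rw [Finset.sum_congr rfl (fun i _ => hrowstar i)]
      rw [Finset.sum_ite_mem]
      simp [hA]
  · intro P hP01 hProw hPcol hPsum hne
    set S : Finset (Fin m × Fin n) := Finset.univ.filter (fun p => P p.1 p.2 = 1) with hSdef
    have hmemS : ∀ p : Fin m × Fin n, p ∈ S ↔ P p.1 p.2 = 1 := by
      intro p; simp [hSdef]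
    have hP0 : ∀ p : Fin m × Fin n, p ∉ S → P p.1 p.2 = 0 := by
      intro p hp
      rcases hP01 p.1 p.2 with h | h
      · exact h
      · exact absurd ((hmemS p).mpr h) hp
    have hPnn : ∀ i a, (0:ℝ) ≤ P i a := by
      intro i a; rcases hP01 i a with h | h <;> rw [h] <;> norm_num
    -- row injectivity
    have hfst : ∀ p ∈ S, ∀ q ∈ S, p.1 = q.1 → p = q := by
      rintro ⟨i, a⟩ hp ⟨i', b⟩ hq h
      simp only at h
      subst h
      by_contra hab
      have hab' : a ≠ b := by
        intro h; exact hab (by rw [h])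
      have h2 : (2:ℝ) ≤ ∑ a, P i a := by
        have hsub : ({a, b} : Finset (Fin n)) ⊆ Finset.univ := Finset.subset_univ _
        have := Finset.sum_le_sum_of_subset_of_nonneg hsub
          (fun c _ _ => hPnn i c)
        rw [Finset.sum_pair hab'] at this
        have hpa : P i a = 1 := (hmemS (i, a)).mp hp
        have hpb : P i b = 1 := (hmemS (i, b)).mp hq
        rw [hpa, hpb] at this
        linarith
      linarith [hProw i]
    -- double sums in terms of S
    have hsplit : ∀ f : Fin m × Fin n → ℝ,
        ∑ i, ∑ a, f (i, a) * P i a = ∑ p ∈ S, f p := by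
      intro f
      rw [← Finset.sum_product']
      rw [← Finset.sum_filter_add_sum_filter_not (Finset.univ ×ˢ Finset.univ)
        (fun p => P p.1 p.2 = 1)]
      have h1 : ∀ p ∈ (Finset.univ ×ˢ Finset.univ).filter (fun p : Fin m × Fin n => P p.1 p.2 = 1),
          f (p.1, p.2) * P p.1 p.2 = f p := by
        intro p hp
        simp only [Finset.mem_filter] at hp
        rw [hp.2]; ring_nf
      have h2 : ∀ p ∈ (Finset.univ ×ˢ Finset.univ).filter (fun p : Fin m × Fin n => ¬ P p.1 p.2 = 1),
          f (p.1, p.2) * P p.1 p.2 = 0 := by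
        intro p hp
        simp only [Finset.mem_filter] at hp
        rw [hP0 p (by simp [hSdef, hp.2])]
        ring
      rw [Finset.sum_congr rfl h1, Finset.sum_congr rfl h2]
      simp [hSdef, Finset.filter_filter]
    have hScard : S.card = k := by
      have h1 : ∑ i, ∑ a, (1:ℝ) * P i a = ∑ p ∈ S, (1:ℝ) := hsplit (fun _ => 1)
      simp only [one_mul] at h1
      rw [hPsum, Finset.sum_const, nsmul_eq_mul, mul_one] at h1
      exact_mod_cast h1.symm
    have hRHS : ∑ i, ∑ a, D i a * P i a = ∑ p ∈ S, D p.1 p.2 :=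
      hsplit (fun p => D p.1 p.2)
    have hLHS : ∑ i, ∑ a, D i a * Pstar i a = ∑ i ∈ AI, D i (τ i) := by
      have hinner : ∀ i, ∑ a, D i a * Pstar i a = if i ∈ AI then D i (τ i) else 0 := by
        intro i
        by_cases hi : i ∈ AI
        · simp [hPstar, hi, mul_ite]
        · simp [hPstar, hi]
      rw [Finset.sum_congr rfl (fun i _ => hinner i), Finset.sum_ite_mem]
      simp
    rw [hRHS, hLHS]
    -- good and bad cells
    set G : Finset (Fin m × Fin n) := S.filter (fun p => p.1 ∈ AI ∧ p.2 ∈ BI) with hGdef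
    have hGsub : G ⊆ S := Finset.filter_subset _ _
    set R : Finset (Fin m) := G.image Prod.fst with hRdef
    have hRsub : R ⊆ AI := by
      intro i hi
      simp only [hRdef, Finset.mem_image] at hi
      obtain ⟨p, hp, hpi⟩ := hi
      simp only [hGdef, Finset.mem_filter] at hp
      exact hpi ▸ hp.2.1
    have hRcard : R.card = G.card := by
      apply Finset.card_image_of_injOn
      intro p hp q hq h
      exact hfst p (hGsub hp) q (hGsub hq) h
    -- Part A : on R vs G
    have hA1 : ∑ i ∈ R, D i (τ i) = ∑ p ∈ G, D p.1 (τ p.1) := by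
      rw [hRdef]
      rw [Finset.sum_image (fun p hp q hq h => hfst p (hGsub hp) q (hGsub hq) h)]
    have hAle : ∀ p ∈ G, D p.1 (τ p.1) ≤ D p.1 p.2 := by
      intro p hp
      simp only [hGdef, Finset.mem_filter] at hp
      by_cases h : p.2 = τ p.1
      · rw [h]
      · exact le_of_lt (hcons1 p.1 hp.2.1 p.2 h)
    -- Part B card facts
    have hBcard : (S \ G).card = (AI \ R).card := by
      rw [Finset.card_sdiff_of_subset hGsub, Finset.card_sdiff_of_subset hRsub, hScard, hA, hRcard]
    have hBlt : ∀ i ∈ AI \ R, ∀ p ∈ S \ G, D i (τ i) < D p.1 p.2 := by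
      intro i hi p hp
      simp only [Finset.mem_sdiff, hGdef, Finset.mem_filter] at hp
      have hbad : p.1 ∉ AI ∨ p.2 ∉ BI := by
        by_contra h
        push_neg at h
        exact hp.2 ⟨hp.1, h⟩
      exact hdist p.1 p.2 hbad i (Finset.mem_sdiff.mp hi).1
    have hsum_split_S : ∑ p ∈ S, D p.1 p.2 =
        ∑ p ∈ S \ G, D p.1 p.2 + ∑ p ∈ G, D p.1 p.2 := (Finset.sum_sdiff hGsub).symm
    have hsum_split_A : ∑ i ∈ AI, D i (τ i) =
        ∑ i ∈ AI \ R, D i (τ i) + ∑ i ∈ R, D i (τ i) := (Finset.sum_sdiff hRsub).symm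
    rw [hsum_split_S, hsum_split_A]
    by_cases hbd : (S \ G).Nonempty
    · have h1 : ∑ i ∈ AI \ R, D i (τ i) < ∑ p ∈ S \ G, D p.1 p.2 := by
        have hne' : (AI \ R).Nonempty := Finset.card_pos.mp (hBcard ▸ Finset.card_pos.mpr hbd)
        exact aux_lt _ _ _ _ hBcard.symm hne' hBlt
      have h2 : ∑ i ∈ R, D i (τ i) ≤ ∑ p ∈ G, D p.1 p.2 := by
        rw [hA1]; exact Finset.sum_le_sum hAle
      linarith
    · -- S = G
      have hSG : S \ G = ∅ := Finset.not_nonempty_iff_eq_empty.mp hbd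
      have hSeqG : S = G := Finset.Subset.antisymm
        (fun p hp => by
          by_contra h
          exact (Finset.eq_empty_iff_forall_notMem.mp hSG p) (Finset.mem_sdiff.mpr ⟨hp, h⟩))
        hGsub
      have hAR : AI \ R = ∅ := Finset.card_eq_zero.mp (by rw [← hBcard, hSG]; simp)
      have hReqA : R = AI := Finset.Subset.antisymm hRsub
        (fun i hi => by
          by_contra h
          exact (Finset.eq_empty_iff_forall_notMem.mp hAR i) (Finset.mem_sdiff.mpr ⟨hi, h⟩))
      -- exists a good cell off the diagonal
      have hexists : ∃ p ∈ G, p.2 ≠ τ p.1 := by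
        by_contra h
        push_neg at h
        apply hne
        funext i; funext a
        by_cases hia : (i, a) ∈ S
        · have h1 : P i a = 1 := (hmemS (i, a)).mp hia
          have h2 : (i, a) ∈ G := hSeqG ▸ hia
          have h3 : a = τ i := h (i, a) h2
          have h4 : i ∈ AI := (Finset.mem_filter.mp h2).2.1
          rw [h1, hPstar, if_pos ⟨h4, h3⟩]
        · have h1 : P i a = 0 := hP0 (i, a) hia
          rw [h1, hPstar]
          rw [if_neg]
          rintro ⟨hiA, haτ⟩
          have : i ∈ R := hReqA ▸ hiA
          simp only [hRdef, Finset.mem_image] at this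
          obtain ⟨p, hp, hpi⟩ := this
          have hpτ : p.2 = τ p.1 := h p hp
          have : p = (i, a) := by
            have : p = (p.1, p.2) := rfl
            rw [this, hpi, hpτ, hpi, ← haτ]
          exact hia (this ▸ hGsub hp)
      have h1 : ∑ i ∈ R, D i (τ i) < ∑ p ∈ G, D p.1 p.2 := by
        rw [hA1]
        obtain ⟨p, hp, hpne⟩ := hexists
        refine Finset.sum_lt_sum hAle ⟨p, hp, ?_⟩
        exact hcons1 p.1 (Finset.mem_filter.mp hp).2.1 p.2 hpne
      have h2 : ∑ i ∈ AI \ R, D i (τ i) = 0 := by rw [hAR]; simp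
      have h3 : ∑ p ∈ S \ G, D p.1 p.2 = 0 := by rw [hSG]; simp
      linarith
end
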